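/- Let 𝒳 be a finite set, P a pmf on 𝒳 with P(x) > 0 for all x, and for z ≥ 0 and a pmf Q on 𝒳 define g_{z,Q,P}(x) = (1 − z²/2)·P(x) + z·√(Q(x)·P(x)) and c_P(z,Q) = Σ_x g_{z,Q,P}(x) · log₂( (Σ_{x'} g_{z,Q,P}(x')) / g_{z,Q,P}(x) ). If (z*, Q*) maximizes c_P(z,Q) over the set 𝒢 = {(z,Q) : z ≥ 0, Q a pmf on 𝒳, g_{z,Q,P}(x) ≥ 0 ∀x}, then Q*(x) = Q*(y) for all x, y ∈ 𝒳 with P(x) = P(y). -/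

import Mathlib

open Real Finset

private lemma aux_term {v T : ℝ} (hv : 0 ≤ v) (hvT : v ≤ T) :
    v * Real.logb 2 (T / v) = (v * Real.log T - v * Real.log v) / Real.log 2 := by
  rcases hv.lt_or_eq with h | h
  · have hT : (0:ℝ) < T := lt_of_lt_of_le h hvT
    rw [Real.logb, Real.log_div hT.ne' h.ne']
    ring
  · simp [← h]

private lemma aux_convex {a b : ℝ} (ha : 0 ≤ a) (hb : 0 ≤ b) :
    (a + b) * Real.log ((a + b) / 2) ≤ a * Real.log a + b * Real.log b := by
  have h := Real.convexOn_mul_log.2 (Set.mem_Ici.2 ha) (Set.mem_Ici.2 hb)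
      (by norm_num : (0:ℝ) ≤ 1/2) (by norm_num : (0:ℝ) ≤ 1/2) (by norm_num)
  simp only [smul_eq_mul] at h
  have e : (1/2 : ℝ) * a + (1/2 : ℝ) * b = (a + b) / 2 := by ring
  rw [e] at h
  nlinarith [h]

private lemma aux_mono {C : ℝ} (hC : 0 ≤ C) :
    StrictMonoOn (fun m : ℝ => (2*m + C) * Real.log (2*m + C) - 2*(m * Real.log m))
      (Set.Ici 0) := by
  apply strictMonoOn_of_deriv_pos (convex_Ici 0)
  · exact ((Real.continuous_mul_log.comp (by continuity)).sub
      (continuous_const.mul Real.continuous_mul_log)).continuousOn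
  · intro m hm
    rw [interior_Ici] at hm
    have hm : (0:ℝ) < m := hm
    have h1 : (0:ℝ) < 2*m + C := by linarith
    have d1 : HasDerivAt (fun m : ℝ => (2*m + C) * Real.log (2*m + C))
        ((Real.log (2*m + C) + 1) * 2) m := by
      have hinner : HasDerivAt (fun x : ℝ => 2*x + C) 2 m := by
        simpa using ((hasDerivAt_id m).const_mul 2).add_const C
      have := (Real.hasDerivAt_mul_log h1.ne').comp m hinner
      exact this
    have d2 : HasDerivAt (fun m : ℝ => 2*(m * Real.log m)) (2*(Real.log m + 1)) m :=
      (Real.hasDerivAt_mul_log hm.ne').const_mul 2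
    have d12 : HasDerivAt (fun m : ℝ => (2*m + C) * Real.log (2*m + C) - 2*(m * Real.log m))
        ((Real.log (2*m + C) + 1) * 2 - 2*(Real.log m + 1)) m := d1.sub d2
    rw [d12.deriv]
    have hlog : Real.log m < Real.log (2*m + C) := Real.log_lt_log hm (by linarith)
    nlinarith [hlog]

/-- Symmetry of the optimal tilting (Lemma 2 of the paper): if `(z*, Q*)` maximizes
`c_P(z,Q) = Σ_x g_{z,Q,P}(x)·log₂(Σ_{x'} g_{z,Q,P}(x')/g_{z,Q,P}(x))` over the feasible
set `𝒢 = {(z,Q) : z ≥ 0, Q a pmf, g_{z,Q,P}(x) ≥ 0 ∀x}`, where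
`g_{z,Q,P}(x) = (1 − z²/2)P(x) + z√(Q(x)P(x))`, then `Q*(x) = Q*(y)` whenever
`P(x) = P(y)`. -/
theorem stmt_9 {𝒳 : Type*} [Fintype 𝒳]
    (P : 𝒳 → ℝ) (hP : ∀ x, 0 < P x) (hPsum : ∑ x, P x = 1)
    (g : ℝ → (𝒳 → ℝ) → 𝒳 → ℝ)
    (hg : g = fun z Q x => (1 - z ^ 2 / 2) * P x + z * Real.sqrt (Q x * P x))
    (zs : ℝ) (Qs : 𝒳 → ℝ) (hzs : 0 ≤ zs) (hQs : ∀ x, 0 ≤ Qs x) (hQssum : ∑ x, Qs x = 1)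
    (hfeas : ∀ x, 0 ≤ g zs Qs x)
    (hmax : ∀ (z : ℝ) (Q : 𝒳 → ℝ), 0 ≤ z → (∀ x, 0 ≤ Q x) → (∑ x, Q x = 1) →
      (∀ x, 0 ≤ g z Q x) →
      (∑ x, g z Q x * Real.logb 2 ((∑ x', g z Q x') / g z Q x)) ≤
        ∑ x, g zs Qs x * Real.logb 2 ((∑ x', g zs Qs x') / g zs Qs x)) :
    ∀ x y : 𝒳, P x = P y → Qs x = Qs y := by
  classical
  have gdef : ∀ z Q (w : 𝒳), g z Q w = (1 - z ^ 2 / 2) * P w + z * Real.sqrt (Q w * P w) := by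
    simp [hg]
  intro x y hPxy
  by_contra hne
  have hxy : x ≠ y := by rintro rfl; exact hne rfl
  -- the per-coordinate entropy-sum identity
  have csum : ∀ (G : 𝒳 → ℝ), (∀ w, 0 ≤ G w) →
      ∑ w, G w * Real.logb 2 ((∑ w', G w') / G w)
        = ((∑ w, G w) * Real.log (∑ w, G w) - ∑ w, G w * Real.log (G w)) / Real.log 2 := by
    intro G hGnn
    have hT : ∀ w, G w ≤ ∑ w', G w' := fun w =>
      Finset.single_le_sum (fun i _ => hGnn i) (Finset.mem_univ w)
    rw [Finset.sum_congr rfl (fun w _ => aux_term (hGnn w) (hT w)),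
      ← Finset.sum_div, Finset.sum_sub_distrib, ← Finset.sum_mul]
  -- Step 1: zs > 0
  have hzpos : 0 < zs := by
    rcases hzs.lt_or_eq with h | h
    · exact h
    · exfalso
      have hg1 : ∀ w, g 1 P w = 3/2 * P w := by
        intro w
        rw [gdef, Real.sqrt_mul_self (hP w).le]
        ring
      have hg0 : ∀ w, g zs Qs w = P w := by
        intro w
        rw [gdef, ← h]
        norm_num
      have hsum1' : ∑ w, (3/2 : ℝ) * P w = 3/2 := by
        rw [← Finset.mul_sum, hPsum, mul_one]
      have key := hmax 1 P zero_le_one (fun w => (hP w).le) hPsum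
        (fun w => by rw [hg1]; nlinarith [hP w])
      simp only [hg1, hg0, hsum1', hPsum] at key
      have lhs_eq : ∑ w, (3/2 : ℝ) * P w * Real.logb 2 (3/2 / (3/2 * P w))
          = 3/2 * ∑ w, P w * Real.logb 2 (1 / P w) := by
        rw [Finset.mul_sum]
        refine Finset.sum_congr rfl fun w _ => ?_
        rw [show (3/2 : ℝ) / (3/2 * P w) = 1 / P w by
          rw [div_mul_eq_div_div, div_self (by norm_num)]]
        ring
      rw [lhs_eq] at key
      have hle1 : ∀ w, P w ≤ 1 := by
        intro w
        rw [← hPsum]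
        exact Finset.single_le_sum (fun i _ => (hP i).le) (Finset.mem_univ w)
      have hPx1 : P x < 1 := by
        have hy' : y ∈ Finset.univ.erase x := Finset.mem_erase.2 ⟨hxy.symm, Finset.mem_univ y⟩
        have h1 : P y ≤ ∑ w ∈ Finset.univ.erase x, P w :=
          Finset.single_le_sum (fun i _ => (hP i).le) hy'
        have h2 : P x + ∑ w ∈ Finset.univ.erase x, P w = 1 := by
          rw [Finset.add_sum_erase _ P (Finset.mem_univ x), hPsum]
        have := hP y
        linarith
      have hterm : ∀ w, 0 ≤ P w * Real.logb 2 (1 / P w) := by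
        intro w
        apply mul_nonneg (hP w).le
        apply Real.logb_nonneg one_lt_two
        rw [le_div_iff₀ (hP w), one_mul]
        exact hle1 w
      have htermx : 0 < P x * Real.logb 2 (1 / P x) := by
        apply mul_pos (hP x)
        apply Real.logb_pos one_lt_two
        rw [lt_div_iff₀ (hP x), one_mul]
        exact hPx1
      have hHpos : 0 < ∑ w, P w * Real.logb 2 (1 / P w) :=
        Finset.sum_pos' (fun i _ => hterm i) ⟨x, Finset.mem_univ x, htermx⟩
      linarith
  -- Step 2: the symmetrized distribution
  set Q2 : 𝒳 → ℝ := fun w => (Qs w + Qs (Equiv.swap x y w)) / 2 with hQ2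
  have hQ2x : Q2 x = (Qs x + Qs y) / 2 := by simp [hQ2, Equiv.swap_apply_left]
  have hQ2y : Q2 y = (Qs x + Qs y) / 2 := by
    simp [hQ2, Equiv.swap_apply_right]; ring
  have hQ2w : ∀ w, w ≠ x → w ≠ y → Q2 w = Qs w := by
    intro w h1 h2
    simp [hQ2, Equiv.swap_apply_of_ne_of_ne h1 h2]
  have hQ2nn : ∀ w, 0 ≤ Q2 w := by
    intro w
    have := hQs w; have := hQs (Equiv.swap x y w)
    simp only [hQ2]; linarith
  have hQ2sum : ∑ w, Q2 w = 1 := by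
    have hswap : ∑ w, Qs (Equiv.swap x y w) = 1 := by
      rw [Equiv.sum_comp (Equiv.swap x y) Qs]; exact hQssum
    simp only [hQ2]
    rw [← Finset.sum_div, Finset.sum_add_distrib, hQssum, hswap]
    norm_num
  have geq : ∀ w, w ≠ x → w ≠ y → g zs Q2 w = g zs Qs w := by
    intro w h1 h2
    rw [gdef, gdef, hQ2w w h1 h2]
  -- values at x and y
  have hA : g zs Qs x = (1 - zs ^ 2 / 2) * P x + zs * Real.sqrt (Qs x * P x) := gdef _ _ _
  have hB : g zs Qs y = (1 - zs ^ 2 / 2) * P x + zs * Real.sqrt (Qs y * P x) := by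
    rw [gdef, ← hPxy]
  have hM : g zs Q2 x = (1 - zs ^ 2 / 2) * P x
      + zs * Real.sqrt (1/2 * (Qs x * P x) + 1/2 * (Qs y * P x)) := by
    rw [gdef, show Q2 x * P x = 1/2 * (Qs x * P x) + 1/2 * (Qs y * P x) by
      rw [hQ2x]; ring]
  have gQ2y : g zs Q2 y = g zs Q2 x := by
    rw [gdef _ _ y, gdef _ _ x, hQ2x, hQ2y, hPxy]
  -- strict concavity of sqrt
  have hab : Qs x * P x ≠ Qs y * P x := fun h => hne (mul_right_cancel₀ (hP x).ne' h)
  have scs := Real.strictConcaveOn_sqrt.2 (Set.mem_Ici.2 (mul_nonneg (hQs x) (hP x).le))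
      (Set.mem_Ici.2 (mul_nonneg (hQs y) (hP x).le)) hab
      (by norm_num : (0:ℝ) < 1/2) (by norm_num : (0:ℝ) < 1/2) (by norm_num)
  simp only [smul_eq_mul] at scs
  have hsM : (g zs Qs x + g zs Qs y) / 2 < g zs Q2 x := by
    have h2 : zs * (1/2 * Real.sqrt (Qs x * P x) + 1/2 * Real.sqrt (Qs y * P x))
        < zs * Real.sqrt (1/2 * (Qs x * P x) + 1/2 * (Qs y * P x)) :=
      mul_lt_mul_of_pos_left scs hzpos
    rw [hA, hB, hM]
    nlinarith [h2]
  have hfeas2 : ∀ w, 0 ≤ g zs Q2 w := by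
    intro w
    by_cases h1 : w = x
    · rw [h1]
      have := hfeas x; have := hfeas y
      linarith [hsM]
    by_cases h2 : w = y
    · rw [h2, gQ2y]
      have := hfeas x; have := hfeas y
      linarith [hsM]
    · rw [geq w h1 h2]; exact hfeas w
  -- apply maximality
  have key := hmax zs Q2 hzs hQ2nn hQ2sum hfeas2
  rw [csum _ hfeas, csum _ hfeas2] at key
  -- split sums
  set D : Finset 𝒳 := (Finset.univ.erase x).erase y with hD
  have hyD : y ∈ Finset.univ.erase x := Finset.mem_erase.2 ⟨hxy.symm, Finset.mem_univ y⟩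
  have split : ∀ F : 𝒳 → ℝ, ∑ w, F w = F x + F y + ∑ w ∈ D, F w := by
    intro F
    rw [← Finset.add_sum_erase _ F (Finset.mem_univ x), ← Finset.add_sum_erase _ F hyD,
      ← add_assoc]
  have hDmem : ∀ w ∈ D, w ≠ x ∧ w ≠ y := by
    intro w hw
    rw [hD, Finset.mem_erase, Finset.mem_erase] at hw
    exact ⟨hw.2.1, hw.1⟩
  set A := g zs Qs x with hAdef
  set B := g zs Qs y with hBdef
  set M := g zs Q2 x with hMdef
  set C := ∑ w ∈ D, g zs Qs w with hCdef
  set K := ∑ w ∈ D, g zs Qs w * Real.log (g zs Qs w) with hKdef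
  have hsum_eq : ∑ w, g zs Qs w = A + B + C := split _
  have hsumlog_eq : ∑ w, g zs Qs w * Real.log (g zs Qs w)
      = A * Real.log A + B * Real.log B + K := split _
  have hCeq : ∑ w ∈ D, g zs Q2 w = C := by
    refine Finset.sum_congr rfl fun w hw => ?_
    exact geq w (hDmem w hw).1 (hDmem w hw).2
  have hKeq : ∑ w ∈ D, g zs Q2 w * Real.log (g zs Q2 w) = K := by
    refine Finset.sum_congr rfl fun w hw => ?_
    rw [geq w (hDmem w hw).1 (hDmem w hw).2]
  have hsum2_eq : ∑ w, g zs Q2 w = 2*M + C := by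
    rw [split _, gQ2y, hCeq]; ring
  have hsumlog2_eq : ∑ w, g zs Q2 w * Real.log (g zs Q2 w)
      = 2*(M * Real.log M) + K := by
    rw [split _, gQ2y, hKeq]; ring
  rw [hsum_eq, hsumlog_eq, hsum2_eq, hsumlog2_eq] at key
  -- the strict inequality contradicting key
  have hA0 : 0 ≤ A := hfeas x
  have hB0 : 0 ≤ B := hfeas y
  have hC0 : 0 ≤ C := Finset.sum_nonneg fun w _ => hfeas w
  have hs0 : 0 ≤ (A + B)/2 := by linarith
  have hmono := aux_mono hC0 (Set.mem_Ici.2 hs0) (Set.mem_Ici.2 (le_trans hs0 hsM.le)) hsM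
  simp only at hmono
  have hconv := aux_convex hA0 hB0
  have hlog2 : (0:ℝ) < Real.log 2 := Real.log_pos one_lt_two
  have hnum : (A + B + C) * Real.log (A + B + C)
        - (A * Real.log A + B * Real.log B + K)
      < (2*M + C) * Real.log (2*M + C) - (2*(M * Real.log M) + K) := by
    have e1 : 2*((A+B)/2) + C = A + B + C := by ring
    have e2 : 2*((A+B)/2 * Real.log ((A+B)/2)) = (A+B) * Real.log ((A+B)/2) := by ring
    rw [e1, e2] at hmono
    linarith
  have : ((A + B + C) * Real.log (A + B + C)
        - (A * Real.log A + B * Real.log B + K)) / Real.log 2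
      < ((2*M + C) * Real.log (2*M + C) - (2*(M * Real.log M) + K)) / Real.log 2 :=
    (div_lt_div_iff_of_pos_right hlog2).2 hnum
  linarith
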